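/- Let ρ be the largest root of x^3 - a x^2 - (a+3)x - 1 with a ∈ Z, a ≥ 0, and suppose Z[ρ] is the full ring of integers of K = Q(ρ). Set δ = (1/(a^2+3a+9)) · (-4-a + (-1-2a)ρ + 2ρ^2)(-(a+2) - aρ + ρ^2). Then δ is a totally positive element of the codifferent of O_K, and for every α = v_1 + v_2ρ + v_3ρ^2 with v_i ∈ Z, one has Tr(αδ) = v_1 + v_3. -/
import Mathlib

set_option maxHeartbeats 1000000

theorem simplest_cubic_aux (a : ℤ) (ha : 0 ≤ a) (ρ ρ' ρ'' : ℝ)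
    (hρ : ρ^3 - a*ρ^2 - (a+3)*ρ - 1 = 0)
    (hρ' : ρ'^3 - a*ρ'^2 - (a+3)*ρ' - 1 = 0)
    (hρ'' : ρ''^3 - a*ρ''^2 - (a+3)*ρ'' - 1 = 0)
    (hlt1 : ρ' < ρ) (hlt2 : ρ'' < ρ') :
    (0 < ((-4 - a + (-1 - 2*a)*ρ + 2*ρ^2) * (-(a+2) - a*ρ + ρ^2)) / (a^2 + 3*a + 9) ∧
     0 < ((-4 - a + (-1 - 2*a)*ρ' + 2*ρ'^2) * (-(a+2) - a*ρ' + ρ'^2)) / (a^2 + 3*a + 9) ∧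
     0 < ((-4 - a + (-1 - 2*a)*ρ'' + 2*ρ''^2) * (-(a+2) - a*ρ'' + ρ''^2)) / (a^2 + 3*a + 9)) ∧
    (∀ v₁ v₂ v₃ : ℤ,
      ((v₁:ℝ) + v₂*ρ + v₃*ρ^2) *
          (((-4 - a + (-1 - 2*a)*ρ + 2*ρ^2) * (-(a+2) - a*ρ + ρ^2)) / (a^2 + 3*a + 9))
        + ((v₁:ℝ) + v₂*ρ' + v₃*ρ'^2) *
          (((-4 - a + (-1 - 2*a)*ρ' + 2*ρ'^2) * (-(a+2) - a*ρ' + ρ'^2)) / (a^2 + 3*a + 9))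
        + ((v₁:ℝ) + v₂*ρ'' + v₃*ρ''^2) *
          (((-4 - a + (-1 - 2*a)*ρ'' + 2*ρ''^2) * (-(a+2) - a*ρ'' + ρ''^2)) / (a^2 + 3*a + 9))
        = (v₁:ℝ) + v₃) := by
  have haR : (0:ℝ) ≤ (a:ℝ) := by exact_mod_cast ha
  have hD : (0:ℝ) < (a:ℝ)^2 + 3*a + 9 := by linarith [sq_nonneg (a:ℝ)]
  have hne12 : ρ' ≠ ρ := ne_of_lt hlt1
  have hne13 : ρ'' ≠ ρ := ne_of_lt (hlt2.trans hlt1)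
  have hne23 : ρ'' ≠ ρ' := ne_of_lt hlt2
  -- elementary symmetric functions
  have E12 : ρ^2 + ρ*ρ' + ρ'^2 - a*(ρ+ρ') - (a+3) = 0 := by
    have h : (ρ - ρ') * (ρ^2 + ρ*ρ' + ρ'^2 - a*(ρ+ρ') - (a+3)) = 0 := by
      linear_combination hρ - hρ'
    rcases mul_eq_zero.1 h with h | h
    · exact absurd (sub_eq_zero.1 h).symm hne12
    · exact h
  have E13 : ρ^2 + ρ*ρ'' + ρ''^2 - a*(ρ+ρ'') - (a+3) = 0 := by
    have h : (ρ - ρ'') * (ρ^2 + ρ*ρ'' + ρ''^2 - a*(ρ+ρ'') - (a+3)) = 0 := by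
      linear_combination hρ - hρ''
    rcases mul_eq_zero.1 h with h | h
    · exact absurd (sub_eq_zero.1 h).symm hne13
    · exact h
  have he1 : ρ + ρ' + ρ'' = a := by
    have h : (ρ' - ρ'') * (ρ + ρ' + ρ'' - a) = 0 := by linear_combination E12 - E13
    rcases mul_eq_zero.1 h with h | h
    · exact absurd (sub_eq_zero.1 h).symm hne23
    · linarith [sub_eq_zero.1 h]
  have he2 : ρ*ρ' + ρ*ρ'' + ρ'*ρ'' = -(a+3) := by
    linear_combination (ρ + ρ')*he1 - E12
  have he3 : ρ*ρ'*ρ'' = 1 := by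
    linear_combination (ρ*ρ')*he1 - ρ*E12 + hρ
  have hfact : ∀ x : ℝ, (x - ρ)*((x - ρ')*(x - ρ'')) = x^3 - a*x^2 - (a+3)*x - 1 := by
    intro x
    linear_combination (-(x^2))*he1 + x*he2 - he3
  -- root locations
  have hb1 : (a:ℝ) + 1 < ρ := by
    have h3 : ((a:ℝ)+1-ρ)*((((a:ℝ)+1-ρ')*(((a:ℝ)+1-ρ'')))) = -(2*(a:ℝ))-3 := by
      linear_combination hfact ((a:ℝ)+1)
    by_contra h
    push_neg at h
    have hnn : (0:ℝ) ≤ ((a:ℝ)+1-ρ)*((((a:ℝ)+1-ρ')*(((a:ℝ)+1-ρ'')))) :=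
      mul_nonneg (by linarith) (mul_nonneg (by linarith) (by linarith))
    rw [h3] at hnn
    linarith
  have hm1 : ((-1:ℝ)-ρ)*((((-1:ℝ)-ρ')*(((-1:ℝ)-ρ'')))) = 1 := by
    linear_combination hfact (-1)
  have hc : ρ'' < -1 := by
    by_contra h
    push_neg at h
    have h2 : (0:ℝ) ≤ ((-1:ℝ)-ρ')*((-1:ℝ)-ρ'') := by
      have h5 := mul_nonneg (by linarith : (0:ℝ) ≤ -((-1:ℝ)-ρ')) (by linarith : (0:ℝ) ≤ -((-1:ℝ)-ρ''))
      rw [neg_mul_neg] at h5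
      exact h5
    have h4 : ((-1:ℝ)-ρ)*((((-1:ℝ)-ρ')*(((-1:ℝ)-ρ'')))) ≤ 0 :=
      mul_nonpos_of_nonpos_of_nonneg (by linarith) h2
    rw [hm1] at h4
    linarith
  have hb' : -1 < ρ' := by
    by_contra h
    push_neg at h
    have h2 : (0:ℝ) ≤ ((-1:ℝ)-ρ')*((-1:ℝ)-ρ'') :=
      mul_nonneg (by linarith) (by linarith)
    have h4 : ((-1:ℝ)-ρ)*((((-1:ℝ)-ρ')*(((-1:ℝ)-ρ'')))) ≤ 0 :=
      mul_nonpos_of_nonpos_of_nonneg (by linarith) h2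
    rw [hm1] at h4
    linarith
  have hρ'neg : ρ' < 0 := by
    by_contra h
    push_neg at h
    have h4 : ρ*ρ'*ρ'' ≤ 0 :=
      mul_nonpos_of_nonneg_of_nonpos (mul_nonneg (by linarith) h) (by linarith)
    rw [he3] at h4
    linarith
  have hc2 : -2 < ρ'' := by
    have hm2 : ((-2:ℝ)-ρ)*((((-2:ℝ)-ρ')*(((-2:ℝ)-ρ'')))) = -(2*(a:ℝ))-3 := by
      linear_combination hfact (-2)
    by_contra h
    push_neg at h
    have h2 : ((-2:ℝ)-ρ')*((-2:ℝ)-ρ'') ≤ 0 :=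
      mul_nonpos_of_nonpos_of_nonneg (by linarith) (by linarith)
    have h4 := mul_nonneg (by linarith : (0:ℝ) ≤ -((-2:ℝ)-ρ))
      (by linarith : (0:ℝ) ≤ -(((-2:ℝ)-ρ')*((-2:ℝ)-ρ'')))
    rw [neg_mul_neg, hm2] at h4
    linarith
  have hb2 : ρ < (a:ℝ) + 2 := by
    have hm3 : ((a:ℝ)+2-ρ)*((((a:ℝ)+2-ρ')*(((a:ℝ)+2-ρ'')))) = (a:ℝ)^2+3*a+1 := by
      linear_combination hfact ((a:ℝ)+2)
    by_contra h
    push_neg at h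
    have h2 : (0:ℝ) < ((a:ℝ)+2-ρ')*((a:ℝ)+2-ρ'') :=
      mul_pos (by linarith) (by linarith)
    have h4 : ((a:ℝ)+2-ρ)*((((a:ℝ)+2-ρ')*(((a:ℝ)+2-ρ'')))) ≤ 0 :=
      mul_nonpos_of_nonpos_of_nonneg (by linarith) h2.le
    rw [hm3] at h4
    linarith [sq_nonneg (a:ℝ)]
  have ha2 : (0:ℝ) < (a:ℝ) + 2 := by linarith
  have hsharp : -1 < ((a:ℝ)+2)*ρ' := by
    have hx : (-1/((a:ℝ)+2)-ρ)*(((-1/((a:ℝ)+2)-ρ')*((-1/((a:ℝ)+2)-ρ'')))) =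
        (2*(a:ℝ)+3)/((a:ℝ)+2)^3 := by
      have h0 : (-1/((a:ℝ)+2))^3 - (a:ℝ)*(-1/((a:ℝ)+2))^2 - ((a:ℝ)+3)*(-1/((a:ℝ)+2)) - 1
          = (2*(a:ℝ)+3)/((a:ℝ)+2)^3 := by
        field_simp
        ring
      rw [hfact (-1/((a:ℝ)+2)), h0]
    have hxpos : 0 < (2*(a:ℝ)+3)/((a:ℝ)+2)^3 := by positivity
    have hx0 : -1/((a:ℝ)+2) < 0 := by
      rw [neg_div]
      exact neg_neg_of_pos (by positivity)
    have hx1 : -1 ≤ -1/((a:ℝ)+2) := by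
      rw [neg_div]
      have h5 : 1/((a:ℝ)+2) ≤ 1 := by
        rw [div_le_one ha2]
        linarith
      linarith
    have hxρ' : -1/((a:ℝ)+2) < ρ' := by
      by_contra h
      push_neg at h
      have h2 : (0:ℝ) ≤ (-1/((a:ℝ)+2)-ρ')*(-1/((a:ℝ)+2)-ρ'') :=
        mul_nonneg (by linarith) (by linarith)
      have h4 : (-1/((a:ℝ)+2)-ρ)*(((-1/((a:ℝ)+2)-ρ')*((-1/((a:ℝ)+2)-ρ'')))) ≤ 0 :=
        mul_nonpos_of_nonpos_of_nonneg (by linarith) h2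
      rw [hx] at h4
      linarith
    have hcalc : ((a:ℝ)+2)*(-1/((a:ℝ)+2)) = -1 := by
      field_simp
    have := mul_lt_mul_of_pos_left hxρ' ha2
    linarith
  -- positivity of the numerator factors
  have hρpos : (0:ℝ) < ρ := by linarith
  have hρ''neg : ρ'' < 0 := by linarith
  have i2a : ρ * (-((a:ℝ)+2) - a*ρ + ρ^2) = ρ + 1 := by linear_combination hρ
  have i1a : ρ * (-4 - (a:ℝ) + (-1 - 2*a)*ρ + 2*ρ^2) = -ρ^2 + ((a:ℝ)+2)*ρ + 2 := by
    linear_combination 2*hρ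
  have i2b : ρ' * (-((a:ℝ)+2) - a*ρ' + ρ'^2) = ρ' + 1 := by linear_combination hρ'
  have i1b : ρ' * (-4 - (a:ℝ) + (-1 - 2*a)*ρ' + 2*ρ'^2) = -ρ'^2 + ((a:ℝ)+2)*ρ' + 2 := by
    linear_combination 2*hρ'
  have i2c : ρ'' * (-((a:ℝ)+2) - a*ρ'' + ρ''^2) = ρ'' + 1 := by linear_combination hρ''
  have i1c : ρ'' * (-4 - (a:ℝ) + (-1 - 2*a)*ρ'' + 2*ρ''^2) = -ρ''^2 + ((a:ℝ)+2)*ρ'' + 2 := by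
    linear_combination 2*hρ''
  have F2a : 0 < -((a:ℝ)+2) - a*ρ + ρ^2 := by
    by_contra h
    push_neg at h
    have h4 := mul_nonpos_of_nonneg_of_nonpos hρpos.le h
    rw [i2a] at h4
    linarith
  have F1a : 0 < -4 - (a:ℝ) + (-1 - 2*a)*ρ + 2*ρ^2 := by
    have hh : 0 < -ρ^2 + ((a:ℝ)+2)*ρ + 2 := by
      have hmp := mul_pos hρpos (show (0:ℝ) < (a:ℝ)+2-ρ by linarith)
      nlinarith [hmp]
    by_contra h
    push_neg at h
    have h4 := mul_nonpos_of_nonneg_of_nonpos hρpos.le h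
    rw [i1a] at h4
    linarith
  have F2b : -((a:ℝ)+2) - a*ρ' + ρ'^2 < 0 := by
    by_contra h
    push_neg at h
    have h4 := mul_nonpos_of_nonpos_of_nonneg hρ'neg.le h
    rw [i2b] at h4
    linarith
  have F1b : -4 - (a:ℝ) + (-1 - 2*a)*ρ' + 2*ρ'^2 < 0 := by
    have hsq : ρ'^2 < 1 := by
      have := mul_pos (show (0:ℝ) < 1 - ρ' by linarith) (show (0:ℝ) < 1 + ρ' by linarith)
      nlinarith [this]
    have hh : 0 < -ρ'^2 + ((a:ℝ)+2)*ρ' + 2 := by linarith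
    by_contra h
    push_neg at h
    have h4 := mul_nonpos_of_nonpos_of_nonneg hρ'neg.le h
    rw [i1b] at h4
    linarith
  have F2c : 0 < -((a:ℝ)+2) - a*ρ'' + ρ''^2 := by
    by_contra h
    push_neg at h
    have h4 := mul_nonneg (neg_nonneg.2 hρ''neg.le) (neg_nonneg.2 h)
    rw [neg_mul_neg, i2c] at h4
    linarith
  have F1c : 0 < -4 - (a:ℝ) + (-1 - 2*a)*ρ'' + 2*ρ''^2 := by
    have hsq : 1 < ρ''^2 := by
      have := mul_pos_of_neg_of_neg (show ρ''-1 < 0 by linarith) (show ρ''+1 < 0 by linarith)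
      nlinarith [this]
    have hap : (a:ℝ)*ρ'' + (a:ℝ) ≤ 0 := by
      have := mul_nonpos_of_nonneg_of_nonpos haR (show ρ''+1 ≤ 0 by linarith)
      nlinarith [this]
    have hh : -ρ''^2 + ((a:ℝ)+2)*ρ'' + 2 < 0 := by nlinarith [hsq, hap]
    by_contra h
    push_neg at h
    have h4 := mul_nonneg (neg_nonneg.2 hρ''neg.le) (neg_nonneg.2 h)
    rw [neg_mul_neg, i1c] at h4
    linarith
  refine ⟨⟨div_pos (mul_pos F1a F2a) hD, div_pos (mul_pos_of_neg_of_neg F1b F2b) hD,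
    div_pos (mul_pos F1c F2c) hD⟩, ?_⟩
  intro v₁ v₂ v₃
  have key : ((v₁:ℝ) + v₂*ρ + v₃*ρ^2) * ((-4 - a + (-1 - 2*a)*ρ + 2*ρ^2) * (-(a+2) - a*ρ + ρ^2))
      + ((v₁:ℝ) + v₂*ρ' + v₃*ρ'^2) * ((-4 - a + (-1 - 2*a)*ρ' + 2*ρ'^2) * (-(a+2) - a*ρ' + ρ'^2))
      + ((v₁:ℝ) + v₂*ρ'' + v₃*ρ''^2) * ((-4 - a + (-1 - 2*a)*ρ'' + 2*ρ''^2) * (-(a+2) - a*ρ'' + ρ''^2))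
      = ((v₁:ℝ) + v₃) * ((a:ℝ)^2 + 3*a + 9) := by
    linear_combination
      ((-(v₁:ℝ) - 2*v₂ + v₃ - a*v₂ - 2*a*v₁) + (2*(v₁:ℝ) - v₂ - 2*v₃ - a*v₃ - 2*a*v₂)*ρ
        + (2*(v₂:ℝ) - v₃ - 2*a*v₃)*ρ^2 + 2*(v₃:ℝ)*ρ^3) * hρ
      + ((-(v₁:ℝ) - 2*v₂ + v₃ - a*v₂ - 2*a*v₁) + (2*(v₁:ℝ) - v₂ - 2*v₃ - a*v₃ - 2*a*v₂)*ρ'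
        + (2*(v₂:ℝ) - v₃ - 2*a*v₃)*ρ'^2 + 2*(v₃:ℝ)*ρ'^3) * hρ'
      + ((-(v₁:ℝ) - 2*v₂ + v₃ - a*v₂ - 2*a*v₁) + (2*(v₁:ℝ) - v₂ - 2*v₃ - a*v₃ - 2*a*v₂)*ρ''
        + (2*(v₂:ℝ) - v₃ - 2*a*v₃)*ρ''^2 + 2*(v₃:ℝ)*ρ''^3) * hρ''
      + (((v₁:ℝ) + v₂ + v₃ - a*v₂ + 2*a*v₁ + a^2*v₁)
          + ((v₃:ℝ) + v₂ - 2*v₁ - a*v₁)*(ρ + ρ' + ρ'' + a)) * he1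
      + (-2*((v₃:ℝ) + v₂ - 2*v₁ - a*v₁)) * he2
  calc ((v₁:ℝ) + v₂*ρ + v₃*ρ^2) *
          (((-4 - a + (-1 - 2*a)*ρ + 2*ρ^2) * (-(a+2) - a*ρ + ρ^2)) / (a^2 + 3*a + 9))
        + ((v₁:ℝ) + v₂*ρ' + v₃*ρ'^2) *
          (((-4 - a + (-1 - 2*a)*ρ' + 2*ρ'^2) * (-(a+2) - a*ρ' + ρ'^2)) / (a^2 + 3*a + 9))
        + ((v₁:ℝ) + v₂*ρ'' + v₃*ρ''^2) *
          (((-4 - a + (-1 - 2*a)*ρ'' + 2*ρ''^2) * (-(a+2) - a*ρ'' + ρ''^2)) / (a^2 + 3*a + 9))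
      = (((v₁:ℝ) + v₂*ρ + v₃*ρ^2) * ((-4 - a + (-1 - 2*a)*ρ + 2*ρ^2) * (-(a+2) - a*ρ + ρ^2))
        + ((v₁:ℝ) + v₂*ρ' + v₃*ρ'^2) * ((-4 - a + (-1 - 2*a)*ρ' + 2*ρ'^2) * (-(a+2) - a*ρ' + ρ'^2))
        + ((v₁:ℝ) + v₂*ρ'' + v₃*ρ''^2) * ((-4 - a + (-1 - 2*a)*ρ'' + 2*ρ''^2) * (-(a+2) - a*ρ'' + ρ''^2)))
          / ((a:ℝ)^2 + 3*a + 9) := by ring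
    _ = (((v₁:ℝ) + v₃) * ((a:ℝ)^2 + 3*a + 9)) / ((a:ℝ)^2 + 3*a + 9) := by rw [key]
    _ = (v₁:ℝ) + v₃ := mul_div_cancel_right₀ _ (ne_of_gt hD)

theorem simplest_cubic_codifferent_trace (a : ℤ) (ha : 0 ≤ a) (ρ ρ' ρ'' : ℝ)
    (hρ : ρ^3 - a*ρ^2 - (a+3)*ρ - 1 = 0)
    (hρ' : ρ'^3 - a*ρ'^2 - (a+3)*ρ' - 1 = 0)
    (hρ'' : ρ''^3 - a*ρ''^2 - (a+3)*ρ'' - 1 = 0)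
    (hlt1 : ρ' < ρ) (hlt2 : ρ'' < ρ) (hne : ρ' ≠ ρ'') :
    let δ : ℝ → ℝ := fun r =>
      ((-4 - a + (-1 - 2*a)*r + 2*r^2) * (-(a+2) - a*r + r^2)) / (a^2 + 3*a + 9)
    -- δ is a totally positive element of the codifferent
    (0 < δ ρ ∧ 0 < δ ρ' ∧ 0 < δ ρ'') ∧
    -- Tr(αδ) = v₁ + v₃ for α = v₁ + v₂ρ + v₃ρ²
    (∀ v₁ v₂ v₃ : ℤ,
      ((v₁:ℝ) + v₂*ρ + v₃*ρ^2) * δ ρ + ((v₁:ℝ) + v₂*ρ' + v₃*ρ'^2) * δ ρ'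
        + ((v₁:ℝ) + v₂*ρ'' + v₃*ρ''^2) * δ ρ'' = (v₁:ℝ) + v₃) := by
  intro δ
  rcases hne.lt_or_gt with h | h
  · -- ρ' < ρ''
    obtain ⟨⟨p1, p3, p2⟩, tr⟩ := simplest_cubic_aux a ha ρ ρ'' ρ' hρ hρ'' hρ' hlt2 h
    refine ⟨⟨p1, p2, p3⟩, fun v₁ v₂ v₃ => ?_⟩
    have htr := tr v₁ v₂ v₃
    show ((v₁:ℝ) + v₂*ρ + v₃*ρ^2) *
        (((-4 - a + (-1 - 2*a)*ρ + 2*ρ^2) * (-(a+2) - a*ρ + ρ^2)) / (a^2 + 3*a + 9))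
      + ((v₁:ℝ) + v₂*ρ' + v₃*ρ'^2) *
        (((-4 - a + (-1 - 2*a)*ρ' + 2*ρ'^2) * (-(a+2) - a*ρ' + ρ'^2)) / (a^2 + 3*a + 9))
      + ((v₁:ℝ) + v₂*ρ'' + v₃*ρ''^2) *
        (((-4 - a + (-1 - 2*a)*ρ'' + 2*ρ''^2) * (-(a+2) - a*ρ'' + ρ''^2)) / (a^2 + 3*a + 9))
      = (v₁:ℝ) + v₃
    linarith [htr]
  · -- ρ'' < ρ'
    obtain ⟨⟨p1, p2, p3⟩, tr⟩ := simplest_cubic_aux a ha ρ ρ' ρ'' hρ hρ' hρ'' hlt1 h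
    exact ⟨⟨p1, p2, p3⟩, tr⟩
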